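/- Let A be an associative algebra and d₁, …, dₙ : A → A linear maps such that for each i there exist algebra endomorphisms gᵢ, hᵢ of A with dᵢ(ab) = gᵢ(a) dᵢ(b) + dᵢ(a) hᵢ(b) for all a, b ∈ A. Assume g₁ = id, hₙ = id, and hᵢ = gᵢ₊₁ for all i = 1, …, n−1. Then f : A^⊗n → A defined by f(a₁, …, aₙ) = d₁(a₁) ⋯ dₙ(aₙ) is a Hochschild n-cocycle: (∂f)(a₀, …, aₙ) := a₀ f(a₁,…,aₙ) + Σᵢ₌₁ⁿ (−1)ⁱ f(a₀,…,aᵢ₋₁aᵢ,…,aₙ) + (−1)ⁿ⁺¹ f(a₀,…,aₙ₋₁) aₙ = 0. -/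

import Mathlib

variable {k A : Type*} [CommRing k] [Ring A] [Algebra k A]

/-- `f(a₁,…,aₙ) = d₁(a₁) ⋯ dₙ(aₙ)` (ordered product). -/
noncomputable def fprod {n : ℕ} (d : Fin n → (A →ₗ[k] A)) (a : Fin n → A) : A :=
  (List.ofFn fun i => d i (a i)).prod

/-- The `i`-th face: merge the entries at positions `i−1` and `i` (`1 ≤ i ≤ n`) of
`(a₀, …, aₙ)`, producing an `n`-tuple. -/
noncomputable def merge {n : ℕ} (a : Fin (n + 1) → A) (i : ℕ) : Fin n → A :=
  fun j => if (j : ℕ) + 1 < i then a j.castSucc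
    else if (j : ℕ) + 1 = i then a j.castSucc * a j.succ
    else a j.succ

lemma telescope {M : Type*} [AddCommGroup M] (S : ℕ → M) (n : ℕ) :
    ∑ i ∈ Finset.Icc 1 n, ((-1:ℤ)^i) • (S (i-1) + S i) = -(S 0) + ((-1:ℤ)^n) • S n := by
  induction n with
  | zero => simp
  | succ m ih =>
    rw [Finset.sum_Icc_succ_top (by omega), ih]
    simp [pow_succ, smul_add, mul_smul]

open Fin.NatCast in
/-- if each `dᵢ` is a `(gᵢ, hᵢ)`-skew derivation with `g₁ = id`, `hₙ = id`
and `hᵢ = gᵢ₊₁`, then `f(a₁,…,aₙ) = d₁(a₁)⋯dₙ(aₙ)` is a Hochschild `n`-cocycle. -/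
theorem stmt9 {n : ℕ} (d : Fin n → (A →ₗ[k] A)) (g h : Fin n → (A →ₐ[k] A))
    (hskew : ∀ (i : Fin n) (a b : A), d i (a * b) = g i a * d i b + d i a * h i b)
    (hfirst : ∀ i : Fin n, (i : ℕ) = 0 → g i = AlgHom.id k A)
    (hlast : ∀ i : Fin n, (i : ℕ) = n - 1 → h i = AlgHom.id k A)
    (hchain : ∀ i j : Fin n, (j : ℕ) = (i : ℕ) + 1 → h i = g j) :
    ∀ a : Fin (n + 1) → A,
      a 0 * fprod d (fun j => a j.succ)
        + (∑ i ∈ Finset.Icc 1 n, ((-1 : ℤ) ^ i) • fprod d (merge a i))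
        + ((-1 : ℤ) ^ (n + 1)) • (fprod d (fun j => a j.castSucc) * a (Fin.last n)) = 0 := by
  intro a
  rcases Nat.eq_zero_or_pos n with rfl | hn
  · simp [fprod]
  haveI : NeZero n := ⟨hn.ne'⟩
  set b : ℕ → A := fun j => a (j : Fin (n+1)) with hb
  set F : ℕ → A := fun j => d ((j : ℕ) : Fin n) (b j) with hF
  set G : ℕ → A := fun j => d ((j : ℕ) : Fin n) (b (j+1)) with hG
  set S : ℕ → A := fun i =>
    ((List.range i).map F).prod *
    (if i < n then g ((i : ℕ) : Fin n) (b i) else b n) *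
    ((List.range' i (n - i)).map G).prod with hS
  have hfin : ∀ (j : ℕ) (hj : j < n), ((j:ℕ) : Fin n) = ⟨j, hj⟩ := by
    intro j hj; ext; simp [Fin.val_cast_of_lt hj]
  have hbj : ∀ (j : ℕ) (hj : j < n+1), b j = a ⟨j, hj⟩ := by
    intro j hj; simp only [hb]; congr 1; ext; simp [Fin.val_cast_of_lt hj]
  have h0' : S 0 = a 0 * fprod d (fun j => a j.succ) := by
    have hl : (List.range' 0 (n - 0)).map G
        = List.ofFn (fun i : Fin n => d i (a i.succ)) := by
      apply List.ext_getElem (by simp)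
      intro j h1 h2
      have hj : j < n := by simpa using h2
      simp only [List.getElem_map, List.getElem_range', List.getElem_ofFn, hG, zero_add, one_mul]
      rw [hfin _ hj, hbj _ (by omega)]
      rfl
    rw [hS]
    simp only [List.range_zero, List.map_nil, List.prod_nil, one_mul, if_pos hn, hl]
    rw [hfirst _ (by simp), hbj 0 (by omega)]
    simp [fprod]
  have hN : S n = fprod d (fun j => a j.castSucc) * a (Fin.last n) := by
    have hl : (List.range n).map F
        = List.ofFn (fun i : Fin n => d i (a i.castSucc)) := by
      apply List.ext_getElem (by simp)
      intro j h1 h2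
      have hj : j < n := by simpa using h2
      simp only [List.getElem_map, List.getElem_range, List.getElem_ofFn, hF]
      rw [hfin _ hj, hbj _ (by omega)]
      rfl
    rw [hS]
    simp only [Nat.sub_self, List.range'_zero, List.map_nil, List.prod_nil, mul_one,
      if_neg (lt_irrefl n), hl]
    rw [hbj n (by omega)]
    rfl
  have hM : ∀ i ∈ Finset.Icc 1 n, ((-1:ℤ)^i) • fprod d (merge a i)
      = ((-1:ℤ)^i) • (S (i-1) + S i) := by
    intro i hi
    simp only [Finset.mem_Icc] at hi
    obtain ⟨hi1, hi2⟩ := hi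
    congr 1
    have hl : List.ofFn (fun j : Fin n => d j (merge a i j)) =
        ((List.range (i-1)).map F)
        ++ [d (((i-1:ℕ)) : Fin n) (b (i-1) * b i)]
        ++ ((List.range' i (n-i)).map G) := by
      apply List.ext_getElem (by simp; omega)
      intro j h1 h2
      have hj : j < n := by simpa using h1
      simp only [List.getElem_ofFn, List.getElem_append, List.length_append, List.length_map,
        List.length_range, List.getElem_map, List.getElem_range, List.getElem_range',
        List.length_cons, List.length_nil, List.getElem_cons, hF, hG, zero_add, one_mul]
      split_ifs with c1 c2 c3
      · rw [hfin j hj]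
        congr 1
        show merge a i ⟨j, hj⟩ = b j
        simp only [merge]
        rw [if_pos (show (⟨j, hj⟩ : Fin n).val + 1 < i by simpa using by omega),
          hbj j (by omega)]
        rfl
      · have hji : j = i - 1 := by omega
        subst hji
        rw [hfin (i-1) hj]
        congr 1
        show merge a i ⟨i-1, hj⟩ = b (i-1) * b i
        simp only [merge]
        rw [if_neg (show ¬((⟨i-1, hj⟩ : Fin n).val + 1 < i) by simpa using by omega),
          if_pos (show (⟨i-1, hj⟩ : Fin n).val + 1 = i by simpa using by omega),
          hbj (i-1) (by omega), hbj i (by omega)]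
        have e2 : (⟨i-1, hj⟩ : Fin n).succ = (⟨i, by omega⟩ : Fin (n+1)) := by
          ext; simp; omega
        rw [e2]
        rfl
      · exact (c3 (by omega)).elim
      · rw [show i + (j - (i - 1 + 1)) = j by omega, hfin j hj]
        congr 1
        show merge a i ⟨j, hj⟩ = b (j+1)
        simp only [merge]
        rw [if_neg (show ¬((⟨j, hj⟩ : Fin n).val + 1 < i) by simpa using by omega),
          if_neg (show ¬((⟨j, hj⟩ : Fin n).val + 1 = i) by simpa using by omega),
          hbj (j+1) (by omega)]
        rfl
    set X := ((List.range (i-1)).map F).prod with hX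
    set Y := ((List.range' i (n-i)).map G).prod with hY
    have hmid : h (((i-1:ℕ)) : Fin n) (b i)
        = if i < n then g (((i:ℕ)) : Fin n) (b i) else b n := by
      by_cases hcase : i < n
      · rw [if_pos hcase, hchain _ _ (by
          rw [Fin.val_cast_of_lt hcase, Fin.val_cast_of_lt (by omega)]; omega)]
      · have hin : i = n := by omega
        subst hin
        rw [if_neg hcase, hlast _ (by rw [Fin.val_cast_of_lt (by omega)])]
        rfl
    have hSi : S i = X * (d (((i-1:ℕ)) : Fin n) (b (i-1))
        * (if i < n then g (((i:ℕ)) : Fin n) (b i) else b n)) * Y := by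
      rw [hS]
      simp only
      have hr : List.range i = List.range (i-1) ++ [i-1] := by
        conv_lhs => rw [show i = (i-1)+1 by omega]
        exact List.range_succ (n := i-1)
      rw [hr, List.map_append, List.prod_append]
      simp [hF, hX, hY, mul_assoc]
    have hSm : S (i-1) = X * (g (((i-1:ℕ)) : Fin n) (b (i-1))
        * d (((i-1:ℕ)) : Fin n) (b i)) * Y := by
      rw [hS]
      simp only
      rw [if_pos (show i-1 < n by omega)]
      have hr : List.range' (i-1) (n-(i-1)) = (i-1) :: List.range' i (n-i) := by
        rw [show n-(i-1) = (n-i)+1 by omega, List.range'_succ, show i-1+1 = i by omega]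
      rw [hr, List.map_cons, List.prod_cons]
      simp [hG, show i-1+1 = i by omega, hX, hY, mul_assoc]
    rw [fprod, hl, List.prod_append, List.prod_append, List.prod_singleton, hskew,
      hSm, hSi, ← hmid]
    noncomm_ring
  rw [Finset.sum_congr rfl hM, telescope, h0', hN]
  simp [pow_succ, smul_add, mul_smul]
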